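/- Let p be an odd prime, m, k positive integers with m/gcd(m,k) odd, α a non-square in F_{p^m}, σ an automorphism of F_{p^m}. Define f : F_{p^m} × F_{p^m} → F_{p^m} × F_{p^m} by f(x,y) = (x^(p^k+1) + α·σ(y^(p^k+1)), xy). Then f is a planar function: for every nonzero (a,b), the map (x,y) ↦ f(x+a, y+b) − f(x,y) is a bijection of F_{p^m} × F_{p^m}. -/

import Mathlib

theorem stmt_6 (p m k : ℕ) (hp : p.Prime) (hodd : Odd p)
    (hm : 0 < m) (hk : 0 < k) (h : Odd (m / Nat.gcd m k))
    (F : Type*) [Field F] [Fintype F] (hF : Fintype.card F = p ^ m)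
    (α : F) (hα : ¬ IsSquare α) (σ : F ≃+* F)
    (f : F × F → F × F)
    (hf : ∀ x y : F, f (x, y) = (x ^ (p ^ k + 1) + α * σ (y ^ (p ^ k + 1)), x * y)) :
    ∀ ab : F × F, ab ≠ 0 →
      Function.Bijective (fun xy : F × F => f (xy + ab) - f xy) := by
  classical
  haveI hfp : Fact p.Prime := ⟨hp⟩
  -- characteristic of F is p
  have hq' : CharP F (ringChar F) := ringChar.charP F
  obtain ⟨n, hrp, hcard⟩ := FiniteField.card F (ringChar F)
  have hpm : p ^ m = ringChar F ^ (n : ℕ) := by rw [← hF, hcard]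
  have hpr : p = ringChar F := by
    have h1 : p ∣ ringChar F ^ (n : ℕ) := hpm ▸ dvd_pow_self p hm.ne'
    exact (Nat.prime_dvd_prime_iff_eq hp hrp).mp (hp.dvd_of_dvd_pow h1)
  haveI hchar : CharP F p := hpr ▸ hq'
  have hp2 : p ≠ 2 := by
    rintro rfl
    rw [Nat.odd_iff] at hodd
    omega
  have two_ne : (2 : F) ≠ 0 := by
    intro h2
    have h3 : ((2 : ℕ) : F) = 0 := by push_cast; exact h2
    have h4 : p ∣ 2 := (CharP.cast_eq_zero_iff F p 2).mp h3
    have := (Nat.prime_dvd_prime_iff_eq hp Nat.prime_two).mp h4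
    exact hp2 this
  have neg_one_ne : (-1 : F) ≠ 1 := by
    intro hh
    apply two_ne
    linear_combination -hh
  set q := p ^ k with hqdef
  have hqpos : 0 < q := pow_pos hp.pos k
  have hqodd : Odd q := hodd.pow
  -- no (q-1)-th root of -1
  have hB : ∀ t : F, t ≠ 0 → t ^ (q - 1) ≠ -1 := by
    intro t ht hcontra
    set d := Nat.gcd m k with hd
    have hdm : d ∣ m := Nat.gcd_dvd_left m k
    have hdk : d ∣ k := Nat.gcd_dvd_right m k
    set e := m / d with he
    have heodd : Odd e := h
    set s : ℕ := ∑ i ∈ Finset.range e, (p ^ d) ^ i with hs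
    have hde : d * e = m := Nat.mul_div_cancel' hdm
    have h1pd : 1 ≤ p ^ d := Nat.one_le_pow _ _ hp.pos
    have h1pm : 1 ≤ p ^ m := Nat.one_le_pow _ _ hp.pos
    have hgs : (p ^ d - 1) * s = p ^ m - 1 := by
      have hcastpow : ((p : ℤ) ^ d) ^ e = (p : ℤ) ^ m := by rw [← pow_mul, hde]
      have hz2 : ((p : ℤ) ^ d - 1) * (∑ i ∈ Finset.range e, ((p : ℤ) ^ d) ^ i)
          = (p : ℤ) ^ m - 1 := by
        rw [mul_comm, geom_sum_mul, hcastpow]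
      zify [h1pd, h1pm]
      push_cast [hs]
      linear_combination hz2
    have hgk : (p ^ d - 1) ∣ (q - 1) := by
      have hqd : q = (p ^ d) ^ (k / d) := by rw [← pow_mul, Nat.mul_div_cancel' hdk]
      rw [hqd]
      simpa using Nat.sub_dvd_pow_sub_pow (p ^ d) 1 (k / d)
    obtain ⟨r, hr⟩ := hgk
    have hsodd : Odd s := by
      have hmod : s % 2 = e % 2 := by
        rw [hs, Finset.sum_nat_mod]
        have hco : ∀ i ∈ Finset.range e, (p ^ d) ^ i % 2 = 1 := fun i _ =>
          Nat.odd_iff.mp (hodd.pow.pow)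
        rw [Finset.sum_congr rfl hco]
        simp
      rw [Nat.odd_iff, hmod, ← Nat.odd_iff]
      exact heodd
    have htq : t ^ (p ^ m - 1) = 1 := by
      have := FiniteField.pow_card_sub_one_eq_one t ht
      rwa [hF] at this
    have hexp2 : (q - 1) * s = (p ^ m - 1) * r := by rw [hr, ← hgs]; ring
    have hone : ((-1 : F)) ^ s = 1 := by
      rw [← hcontra, ← pow_mul, hexp2, pow_mul, htq, one_pow]
    rw [hsodd.neg_one_pow] at hone
    exact neg_one_ne hone
  -- the linearized map is injective on each variable
  have hA : ∀ c u : F, c ≠ 0 → u ≠ 0 → c * u ^ q + c ^ q * u ≠ 0 := by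
    intro c u hc hu hcontra
    set t := u * c⁻¹ with htdef
    have ht : t ≠ 0 := mul_ne_zero hu (inv_ne_zero hc)
    have hkey : (t ^ q + t) * c ^ (q + 1) = c * u ^ q + c ^ q * u := by
      rw [htdef, mul_pow, inv_pow]
      field_simp
      ring
    have h0 : t ^ q + t = 0 := by
      have hcq : c ^ (q + 1) ≠ 0 := pow_ne_zero _ hc
      have := hkey.trans hcontra
      exact (mul_eq_zero.mp this).resolve_right hcq
    have h2 : t ^ (q - 1) = -1 := by
      have hq1 : t ^ q = t ^ (q - 1) * t := by
        rw [← pow_succ]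
        congr 1
        omega
      rw [hq1] at h0
      have h3 : (t ^ (q - 1) + 1) * t = 0 := by linear_combination h0
      rcases mul_eq_zero.mp h3 with hh | hh
      · linear_combination hh
      · exact absurd hh ht
    exact hB t ht h2
  have hring2 : ringChar F ≠ 2 := by rw [← hpr]; exact hp2
  have hSqmul : ∀ w : F, w ≠ 0 → IsSquare (w * σ w) := by
    intro w hw
    have hsw : σ w ≠ 0 := fun hh => hw (σ.injective (by rw [hh, map_zero]))
    rw [FiniteField.isSquare_iff hring2 (mul_ne_zero hw hsw)]
    rw [mul_pow, ← map_pow]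
    rcases FiniteField.pow_dichotomy hring2 hw with h1 | h1
    · rw [h1]; simp
    · rw [h1]; simp
  -- frobenius identities
  have hexp : ∀ x c : F, (x + c) ^ (q + 1) = x ^ (q + 1) + (c * x ^ q + c ^ q * x + c ^ (q + 1)) := by
    intro x c
    have hadd : (x + c) ^ q = x ^ q + c ^ q := by rw [hqdef]; exact add_pow_char_pow x c p k
    rw [pow_succ, hadd, pow_succ, pow_succ]
    ring
  have hfrobsub : ∀ x c : F, (x - c) ^ q = x ^ q - c ^ q := by
    intro x c
    rw [hqdef]
    exact sub_pow_char_pow x c k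
  -- main argument
  intro ab hab
  obtain ⟨a, b⟩ := ab
  have hab' : ¬(a = 0 ∧ b = 0) := by
    rintro ⟨rfl, rfl⟩
    exact hab rfl
  rw [← Finite.injective_iff_bijective]
  rintro ⟨x1, y1⟩ ⟨x2, y2⟩ heq
  simp only [Prod.mk_add_mk, hf, Prod.mk_sub_mk, Prod.mk.injEq, ← hqdef] at heq
  obtain ⟨h1, h2⟩ := heq
  set U := x1 - x2 with hU
  set V := y1 - y2 with hV
  suffices hUV : U = 0 ∧ V = 0 by
    obtain ⟨hU0, hV0⟩ := hUV
    have e1 : x1 = x2 := by rw [← sub_eq_zero]; exact hU0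
    have e2 : y1 = y2 := by rw [← sub_eq_zero]; exact hV0
    rw [e1, e2]
  have e2 : b * U + a * V = 0 := by
    rw [hU, hV]
    linear_combination h2
  simp only [hexp, map_add] at h1
  have s1 : σ (b * V ^ q) = σ (b * y1 ^ q) - σ (b * y2 ^ q) := by
    rw [← map_sub]
    congr 1
    rw [hV, hfrobsub]
    ring
  have s2 : σ (b ^ q * V) = σ (b ^ q * y1) - σ (b ^ q * y2) := by
    rw [← map_sub]
    congr 1
    rw [hV]
    ring
  have s3 : U ^ q = x1 ^ q - x2 ^ q := by rw [hU, hfrobsub]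
  have e1 : a * U ^ q + a ^ q * U + α * σ (b * V ^ q) + α * σ (b ^ q * V) = 0 := by
    rw [s1, s2, s3, hU]
    linear_combination h1
  by_cases hb : b = 0
  · have haa : a ≠ 0 := fun ha => hab' ⟨ha, hb⟩
    have hV0 : V = 0 := by
      rw [hb] at e2
      simpa [haa] using e2
    have hU0 : U = 0 := by
      by_contra hU0
      apply hA a U haa hU0
      rw [hb, hV0] at e1
      simpa using e1
    exact ⟨hU0, hV0⟩
  · have hV0 : V = 0 := by
      by_contra hV0
      set w := b * V ^ q + b ^ q * V with hw
      have hwne : w ≠ 0 := hA b V hb hV0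
      set c := a * b⁻¹ with hc
      have hab2 : a = c * b := by rw [hc]; field_simp
      have hUc : U = -(c * V) := by
        rw [hc]
        field_simp
        linear_combination e2
      have hUq : U ^ q = -(c ^ q * V ^ q) := by
        rw [hUc, hqodd.neg_pow, mul_pow]
      have key : α * σ w = c ^ (q + 1) * w := by
        have e1' : c * b * -(c ^ q * V ^ q) + c ^ q * b ^ q * -(c * V)
            + α * σ (b * V ^ q) + α * σ (b ^ q * V) = 0 := by
          rw [← hUq, ← hUc, ← mul_pow, ← hab2]
          linear_combination e1
        rw [hw, map_add]
        linear_combination e1'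
      have hσw : σ w ≠ 0 := fun hh => hwne (σ.injective (by rw [hh, map_zero]))
      have hα0 : α ≠ 0 := fun hh => hα (hh ▸ ⟨0, by ring⟩)
      have hc0 : c ≠ 0 := by
        intro hc0
        rw [hc0, zero_pow (by omega : q + 1 ≠ 0), zero_mul] at key
        exact (mul_ne_zero hα0 hσw) key
      have hα' : α = c ^ (q + 1) * (w * (σ w)⁻¹) := by
        field_simp
        linear_combination key
      obtain ⟨t2, ht2⟩ : ∃ t2 : ℕ, q + 1 = t2 * 2 := by
        obtain ⟨j, hj⟩ := hqodd
        exact ⟨j + 1, by omega⟩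
      have hsq1 : IsSquare (c ^ (q + 1)) := by
        rw [ht2, pow_mul]
        exact ⟨c ^ t2, by ring⟩
      have hsq2 : IsSquare (w * (σ w)⁻¹) := by
        have hrw : w * (σ w)⁻¹ = (w * σ w) * ((σ w)⁻¹ * (σ w)⁻¹) := by
          field_simp
        rw [hrw]
        exact (hSqmul w hwne).mul ⟨(σ w)⁻¹, rfl⟩
      exact hα (hα' ▸ hsq1.mul hsq2)
    have hU0 : U = 0 := by
      rw [hV0] at e2
      simpa [hb] using e2
    exact ⟨hU0, hV0⟩
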